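/- The d-space structure generated by the controlled paths of c𝕀 is the standard d-interval ↑𝕀: the smallest set of paths in [0,1] containing the surjective increasing maps and the constant loops at 0, 1, and closed under constants, concatenation, and arbitrary increasing reparametrisation, is exactly the set of all increasing continuous maps [0,1] → [0,1]. -/
import Mathlib


open unitInterval Set

noncomputable def conc {X : Type*} (a b : I → X) : I → X := fun t =>
  if h : (t : ℝ) ≤ 1 / 2 then
    a ⟨2 * (t : ℝ), by constructor <;> nlinarith [t.2.1, t.2.2]⟩
  else
    b ⟨2 * (t : ℝ) - 1, by have h' := not_le.mp h; constructor <;> nlinarith [t.2.1, t.2.2]⟩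

structure IsCStructure {X : Type*} [TopologicalSpace X] (S : Set (I → X)) : Prop where
  cont : ∀ a ∈ S, Continuous a
  const_src : ∀ a ∈ S, (fun _ : I => a 0) ∈ S
  const_tgt : ∀ a ∈ S, (fun _ : I => a 1) ∈ S
  concat : ∀ a ∈ S, ∀ b ∈ S, a 1 = b 0 → conc a b ∈ S
  reparam : ∀ a ∈ S, ∀ ρ : I → I, Continuous ρ → Monotone ρ → Function.Surjective ρ → a ∘ ρ ∈ S

structure IsDStructure {X : Type*} [TopologicalSpace X] (S : Set (I → X)) : Prop where
  cont : ∀ a ∈ S, Continuous a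
  const : ∀ x : X, (fun _ : I => x) ∈ S
  concat : ∀ a ∈ S, ∀ b ∈ S, a 1 = b 0 → conc a b ∈ S
  reparam : ∀ a ∈ S, ∀ ρ : I → I, Continuous ρ → Monotone ρ → a ∘ ρ ∈ S

def IsFlexible {X : Type*} [TopologicalSpace X] (S : Set (I → X)) (a : I → X) : Prop :=
  a ∈ S ∧ ∀ (t₁ t₂ : ℝ) (h0 : 0 ≤ t₁) (h12 : t₁ < t₂) (h1 : t₂ ≤ 1),
    (fun t : I => a ⟨(t₂ - t₁) * (t : ℝ) + t₁, by
      constructor <;>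
        nlinarith [t.2.1, t.2.2, mul_nonneg (sub_nonneg.mpr h12.le) t.2.1,
          mul_le_of_le_one_right (sub_nonneg.mpr h12.le) t.2.2]⟩) ∈ S

/-- The standard c-interval `c𝕀`. -/
def cI : Set (I → I) :=
  {a | (Continuous a ∧ Monotone a ∧ Function.Surjective a) ∨
    a = (fun _ : I => 0) ∨ a = (fun _ : I => 1)}


lemma conc_eq_ite {X : Type*} (a b : I → X) :
    conc a b = fun t : I => if (t : ℝ) ≤ 1 / 2
      then a (Set.projIcc 0 1 zero_le_one (2 * (t : ℝ)))
      else b (Set.projIcc 0 1 zero_le_one (2 * (t : ℝ) - 1)) := by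
  funext t
  unfold conc
  split_ifs with h
  · congr 1
    exact (Set.projIcc_of_mem zero_le_one (by constructor <;> nlinarith [t.2.1, t.2.2])).symm
  · congr 1
    have h' := not_le.mp h
    exact (Set.projIcc_of_mem zero_le_one (by constructor <;> nlinarith [t.2.1, t.2.2])).symm

lemma conc_continuous {X : Type*} [TopologicalSpace X] (a b : I → X)
    (ha : Continuous a) (hb : Continuous b) (hab : a 1 = b 0) :
    Continuous (conc a b) := by
  rw [conc_eq_ite]
  apply Continuous.if_le
  · exact ha.comp (continuous_projIcc.comp (by continuity))
  · exact hb.comp (continuous_projIcc.comp (by continuity))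
  · exact continuous_subtype_val
  · exact continuous_const
  · intro t ht
    have h1 : (2 * (t : ℝ)) = 1 := by rw [ht]; norm_num
    have h2 : (2 * (t : ℝ) - 1) = 0 := by rw [ht]; norm_num
    rw [h1, show (1:ℝ) - 1 = 0 from by norm_num]
    have e1 : Set.projIcc (0:ℝ) 1 zero_le_one 1 = (1 : I) :=
      Set.projIcc_of_mem zero_le_one (by norm_num)
    have e2 : Set.projIcc (0:ℝ) 1 zero_le_one 0 = (0 : I) :=
      Set.projIcc_of_mem zero_le_one (by norm_num)
    rw [e1, e2, hab]

lemma conc_mono (a b : I → I) (ha : Monotone a) (hb : Monotone b)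
    (hab : a 1 = b 0) : Monotone (conc a b) := by
  intro s t hst
  have hst' : (s : ℝ) ≤ t := hst
  unfold conc
  split_ifs with hs ht ht
  · exact ha (Subtype.mk_le_mk.mpr (by linarith))
  · calc a ⟨2 * (s:ℝ), _⟩ ≤ a 1 := ha (Subtype.mk_le_mk.mpr (by linarith))
      _ = b 0 := hab
      _ ≤ b ⟨2 * (t:ℝ) - 1, _⟩ := hb (Subtype.mk_le_mk.mpr (by push_neg at ht; linarith))
  · exact absurd (le_trans hst' (by linarith [not_le.mp hs])) hs
  · exact hb (Subtype.mk_le_mk.mpr (by linarith))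

/-- The d-structure generated by the controlled paths of `c𝕀` is the standard d-interval:
all increasing continuous maps `[0,1] → [0,1]`. -/
theorem cI_generated_dStructure :
    ⋂₀ {S : Set (I → I) | IsDStructure S ∧ cI ⊆ S} =
      {a : I → I | Continuous a ∧ Monotone a} := by
  apply Set.Subset.antisymm
  · intro a ha
    exact ha {a | Continuous a ∧ Monotone a}
      ⟨{ cont := fun a ha => ha.1
         const := fun x => ⟨continuous_const, monotone_const⟩
         concat := fun a ha b hb hab =>
           ⟨conc_continuous a b ha.1 hb.1 hab, conc_mono a b ha.2 hb.2 hab⟩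
         reparam := fun a ha ρ hρc hρm => ⟨ha.1.comp hρc, ha.2.comp hρm⟩ },
       by
        intro a ha
        rcases ha with ⟨hc, hm, _⟩ | rfl | rfl
        · exact ⟨hc, hm⟩
        · exact ⟨continuous_const, monotone_const⟩
        · exact ⟨continuous_const, monotone_const⟩⟩
  · rintro a ⟨hc, hm⟩ S ⟨hD, hsub⟩
    have hid : (id : I → I) ∈ S :=
      hsub (Or.inl ⟨continuous_id, monotone_id, Function.surjective_id⟩)
    have := hD.reparam id hid a hc hm
    simpa using this
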